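/- Let I be a good ideal in K[x_1,…,x_n] and let a_1,…,a_n, a, t be nonnegative integers with a_1+⋯+a_n = a and t ≥ 1. Then I^{a+t} : ⟨μ_1^{a_1}⋯μ_n^{a_n}⟩ = Σ_{t_1,…,t_n ≥ 0, t_1+⋯+t_n = t−1} μ_1^{t_1}⋯μ_n^{t_n}·I_{t_1+a_1,…,t_n+a_n}, where the sum is the sum of ideals. -/

import Mathlib

open MvPolynomial

namespace GasanovaRR

/-- The monomial `x^α` in `K[x_1,…,x_n]`. -/
noncomputable def mono (K : Type*) [Field K] {n : ℕ} (α : Fin n → ℕ) :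
    MvPolynomial (Fin n) K :=
  MvPolynomial.monomial (Finsupp.equivFunOnFinite.symm α) 1

/-- `I` is a monomial ideal: it is generated by a set of monomials. -/
def IsMonomialIdeal {K : Type*} [Field K] {n : ℕ}
    (I : Ideal (MvPolynomial (Fin n) K)) : Prop :=
  ∃ A : Set (Fin n → ℕ), I = Ideal.span (mono K '' A)

/-- `x^α` is a minimal monomial generator of `I`, i.e. `x^α ∈ G(I)`:
`x^α ∈ I` and no monomial in `I` strictly divides it. -/
def IsMinGen {K : Type*} [Field K] {n : ℕ}
    (I : Ideal (MvPolynomial (Fin n) K)) (α : Fin n → ℕ) : Prop :=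
  mono K α ∈ I ∧ ∀ β : Fin n → ℕ, mono K β ∈ I → β ≤ α → β = α

/-- The point `α` lies in the box `B_{a_1,…,a_n}` (for box sizes `d_1,…,d_n`). -/
def InBox {n : ℕ} (d a α : Fin n → ℕ) : Prop :=
  ∀ i, a i * d i ≤ α i ∧ α i ≤ (a i + 1) * d i

/-- `I` is a good ideal (w.r.t. box sizes `d`): for every `l ≥ 1`, every minimal
generator of `I^l` lies in a box whose coordinate sum is `l - 1`. -/
def IsGood {K : Type*} [Field K] {n : ℕ}
    (I : Ideal (MvPolynomial (Fin n) K)) (d : Fin n → ℕ) : Prop :=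
  ∀ l : ℕ, 1 ≤ l → ∀ α : Fin n → ℕ, IsMinGen (I ^ l) α →
    ∃ a : Fin n → ℕ, InBox d a α ∧ ∑ i, a i = l - 1

/-- `I` is an `𝔪`-primary monomial ideal whose minimal generating set contains
`μ_i = x_i^{d_i}` with `d_i > 0` for each `i`. -/
def MPrimaryWithCorners {K : Type*} [Field K] {n : ℕ}
    (I : Ideal (MvPolynomial (Fin n) K)) (d : Fin n → ℕ) : Prop :=
  IsMonomialIdeal I ∧ I ≠ ⊤ ∧ (∀ i, 0 < d i) ∧ ∀ i, IsMinGen I (Pi.single i (d i))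

/-- The ideal `I_{a_1,…,a_n}` associated to the box `B_{a_1,…,a_n}`, generated by
`m / (μ_1^{a_1}⋯μ_n^{a_n})` for `m ∈ B_{a_1,…,a_n} ∩ G(I^l)`, `l = a_1+⋯+a_n+1`. -/
noncomputable def boxIdeal {K : Type*} [Field K] {n : ℕ}
    (I : Ideal (MvPolynomial (Fin n) K)) (d a : Fin n → ℕ) :
    Ideal (MvPolynomial (Fin n) K) :=
  Ideal.span ((fun α => mono K (α - fun i => a i * d i)) ''
    {α | InBox d a α ∧ IsMinGen (I ^ (∑ i, a i + 1)) α})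

/-- The Ratliff–Rush closure `Ĩ = ⋃_{k ≥ 0} (I^{k+1} : I^k)`. -/
noncomputable def ratliffRush {K : Type*} [Field K] {n : ℕ}
    (I : Ideal (MvPolynomial (Fin n) K)) : Ideal (MvPolynomial (Fin n) K) :=
  ⨆ k : ℕ, (I ^ (k + 1)).colon ((I ^ k : Ideal (MvPolynomial (Fin n) K)) : Set (MvPolynomial (Fin n) K))

/-- The cone in `ℕ^n` with set `S` of fixed coordinates and vertex `v`. -/
def Cone {n : ℕ} (S : Set (Fin n)) (v : Fin n → ℕ) : Set (Fin n → ℕ) :=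
  {b | (∀ i ∈ S, b i = v i) ∧ ∀ i ∉ S, v i ≤ b i}

/-- `I` is a very good ideal: it is good and `I_{a_1,…,a_n} = I` for all boxes. -/
def IsVeryGood {K : Type*} [Field K] {n : ℕ}
    (I : Ideal (MvPolynomial (Fin n) K)) (d : Fin n → ℕ) : Prop :=
  IsGood I d ∧ ∀ a : Fin n → ℕ, boxIdeal I d a = I

section Basics
variable {K : Type*} [Field K] {n : ℕ}

lemma symm_add (a b : Fin n → ℕ) :
    Finsupp.equivFunOnFinite.symm (a + b) =
      Finsupp.equivFunOnFinite.symm a + Finsupp.equivFunOnFinite.symm b := by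
  ext i; simp

lemma mono_mul (a b : Fin n → ℕ) : mono K a * mono K b = mono K (a + b) := by
  unfold mono; rw [monomial_mul, one_mul, symm_add]

lemma mono_zero : mono K (0 : Fin n → ℕ) = 1 := by
  unfold mono
  have : Finsupp.equivFunOnFinite.symm (0 : Fin n → ℕ) = 0 := by ext i; simp
  rw [this, monomial_zero', C_1]

lemma mono_pow (a : Fin n → ℕ) (N : ℕ) : (mono K a) ^ N = mono K (N • a) := by
  unfold mono; rw [monomial_pow, one_pow]
  have h : N • Finsupp.equivFunOnFinite.symm a = Finsupp.equivFunOnFinite.symm (N • a) := by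
    ext i; simp
  rw [h]

/-- membership criterion for monomial ideals -/
lemma mem_span_mono {p : MvPolynomial (Fin n) K} {S : Set (Fin n → ℕ)} :
    p ∈ Ideal.span (mono K '' S) ↔
      ∀ v ∈ p.support, ∃ u ∈ S, ∀ i, u i ≤ v i := by
  have h : mono K '' S =
      (fun s => MvPolynomial.monomial s (1 : K)) '' (Finsupp.equivFunOnFinite.symm '' S) := by
    rw [Set.image_image]; rfl
  rw [h, MvPolynomial.mem_ideal_span_monomial_image]
  refine forall₂_congr fun v hv => ?_
  constructor
  · rintro ⟨si, ⟨u, hu, rfl⟩, hle⟩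
    exact ⟨u, hu, fun i => hle i⟩
  · rintro ⟨u, hu, hle⟩
    exact ⟨Finsupp.equivFunOnFinite.symm u, ⟨u, hu, rfl⟩, fun i => hle i⟩

lemma support_mono (a : Fin n → ℕ) :
    (mono K a).support = {Finsupp.equivFunOnFinite.symm a} := by
  classical
  unfold mono
  rw [MvPolynomial.support_monomial, if_neg one_ne_zero]

lemma mono_mem_span {w : Fin n → ℕ} {S : Set (Fin n → ℕ)} :
    mono K w ∈ Ideal.span (mono K '' S) ↔ ∃ u ∈ S, ∀ i, u i ≤ w i := by
  rw [mem_span_mono]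
  constructor
  · intro h
    obtain ⟨u, hu, hle⟩ := h (Finsupp.equivFunOnFinite.symm w) (by simp [support_mono])
    exact ⟨u, hu, hle⟩
  · rintro ⟨u, hu, hle⟩ v hv
    rw [support_mono, Finset.mem_singleton] at hv
    subst hv
    exact ⟨u, hu, hle⟩

/-- up-closure : valid for any ideal -/
lemma mono_mem_of_le {J : Ideal (MvPolynomial (Fin n) K)} {v w : Fin n → ℕ}
    (hv : mono K v ∈ J) (hle : ∀ i, v i ≤ w i) : mono K w ∈ J := by
  have : mono K w = mono K (w - v) * mono K v := by
    rw [mono_mul]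
    congr 1
    funext i
    have := hle i
    simp only [Pi.add_apply, Pi.sub_apply]
    omega
  rw [this]
  exact Ideal.mul_mem_left _ _ hv

lemma mono_add_mem {J J' : Ideal (MvPolynomial (Fin n) K)} {v w : Fin n → ℕ}
    (hv : mono K v ∈ J) (hw : mono K w ∈ J') : mono K (v + w) ∈ J * J' := by
  rw [← mono_mul]; exact Ideal.mul_mem_mul hv hw

/-- existence of a minimal generator below any monomial of `J` -/
lemma exists_minGen_le {J : Ideal (MvPolynomial (Fin n) K)} {v : Fin n → ℕ}
    (hv : mono K v ∈ J) : ∃ γ : Fin n → ℕ, (∀ i, γ i ≤ v i) ∧ IsMinGen J γ := by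
  generalize hs : ∑ i, v i = s
  induction s using Nat.strong_induction_on generalizing v with
  | _ s IH =>
    by_cases hmin : ∀ β : Fin n → ℕ, mono K β ∈ J → β ≤ v → β = v
    · exact ⟨v, fun i => le_rfl, hv, hmin⟩
    · push_neg at hmin
      obtain ⟨β, hβJ, hβle, hβne⟩ := hmin
      have hlt : ∑ i, β i < s := by
        subst hs
        have hne : ∃ i, β i < v i := by
          by_contra hc
          push_neg at hc
          exact hβne (funext fun i => le_antisymm (hβle i) (hc i))
        obtain ⟨i, hi⟩ := hne
        exact Finset.sum_lt_sum (fun j _ => hβle j) ⟨i, Finset.mem_univ i, hi⟩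
      obtain ⟨γ, hγle, hγ⟩ := IH _ hlt hβJ rfl
      exact ⟨γ, fun i => le_trans (hγle i) (hβle i), hγ⟩

end Basics
section Spans
variable {K : Type*} [Field K] {n : ℕ}

lemma span_mono_mul_span_mono (S T : Set (Fin n → ℕ)) :
    Ideal.span (mono K '' S) * Ideal.span (mono K '' T) =
      Ideal.span (mono K '' (Set.image2 (· + ·) S T)) := by
  rw [Ideal.span_mul_span']
  congr 1
  ext p
  constructor
  · rintro ⟨x, ⟨u, hu, rfl⟩, y, ⟨v, hv, rfl⟩, rfl⟩
    exact ⟨u + v, Set.mem_image2_of_mem hu hv, (mono_mul u v).symm⟩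
  · rintro ⟨w, ⟨u, hu, v, hv, rfl⟩, rfl⟩
    exact ⟨mono K u, ⟨u, hu, rfl⟩, mono K v, ⟨v, hv, rfl⟩, mono_mul u v⟩

lemma exists_pow_span {I : Ideal (MvPolynomial (Fin n) K)} {A : Set (Fin n → ℕ)}
    (hA : I = Ideal.span (mono K '' A)) (l : ℕ) :
    ∃ B : Set (Fin n → ℕ), I ^ l = Ideal.span (mono K '' B) := by
  induction l with
  | zero =>
    refine ⟨{0}, ?_⟩
    rw [pow_zero]
    rw [Set.image_singleton, mono_zero, Ideal.span_singleton_one, Ideal.one_eq_top]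
  | succ l IH =>
    obtain ⟨B, hB⟩ := IH
    exact ⟨Set.image2 (· + ·) B A, by
      rw [pow_succ, hB, hA, span_mono_mul_span_mono]⟩

end Spans
section Corners
variable {K : Type*} [Field K] {n : ℕ} {I : Ideal (MvPolynomial (Fin n) K)} {d : Fin n → ℕ}

lemma corner_mem (hI : MPrimaryWithCorners I d) (i : Fin n) :
    mono K (Pi.single i (d i)) ∈ I := (hI.2.2.2 i).1

/-- `μ^c ∈ I^{∑ c}` -/
lemma mono_cd_mem (hI : MPrimaryWithCorners I d) (c : Fin n → ℕ) :
    mono K (fun i => c i * d i) ∈ I ^ (∑ i, c i) := by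
  generalize hs : ∑ i, c i = s
  induction s generalizing c with
  | zero =>
    have hc : ∀ i, c i = 0 := by
      intro i
      have := Finset.sum_eq_zero_iff.mp hs
      exact this i (Finset.mem_univ i)
    have : (fun i => c i * d i) = (0 : Fin n → ℕ) := by
      funext i; simp [hc i]
    rw [this, mono_zero, pow_zero, Ideal.one_eq_top]
    exact Submodule.mem_top
  | succ s IH =>
    have hex : ∃ j, 0 < c j := by
      by_contra hc
      push_neg at hc
      simp only [Nat.le_zero] at hc
      rw [Finset.sum_eq_zero (fun i _ => hc i)] at hs
      omega
    obtain ⟨j, hj⟩ := hex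
    set c' : Fin n → ℕ := Function.update c j (c j - 1) with hc'
    have h1 : ∑ i, c i = c j + ∑ i ∈ Finset.univ \ {j}, c i := by
      rw [← Finset.erase_eq, Finset.add_sum_erase _ _ (Finset.mem_univ j)]
    have hsum : ∑ i, c' i = s := by
      rw [hc', Finset.sum_update_of_mem (Finset.mem_univ j)]
      omega
    have hdecomp : (fun i => c i * d i) = (fun i => c' i * d i) + Pi.single j (d j) := by
      funext i
      by_cases h : i = j
      · subst h
        simp [hc', Function.update_self, Pi.single_apply]
        have : c i - 1 + 1 = c i := by omega
        nlinarith [this]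
      · simp [hc', Function.update_of_ne h, Pi.single_apply, h]
    rw [hdecomp, pow_succ]
    exact mono_add_mem (IH c' hsum) (corner_mem hI j)

lemma mono_cd_single_mem (hI : MPrimaryWithCorners I d) (c : Fin n → ℕ) (j : Fin n) :
    mono K ((fun i => c i * d i) + Pi.single j (d j)) ∈ I ^ (∑ i, c i + 1) := by
  rw [pow_succ]
  exact mono_add_mem (mono_cd_mem hI c) (corner_mem hI j)

end Corners
section Star
variable {K : Type*} [Field K] {n : ℕ} {I : Ideal (MvPolynomial (Fin n) K)} {d : Fin n → ℕ}

/-- The key degree bound: any monomial in `I^L` has weighted degree at least `L * ∏ d`. -/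
lemma star (hgood : IsGood I d) (hd : ∀ i, 0 < d i) {L : ℕ} (hL : 1 ≤ L)
    {β : Fin n → ℕ} (hβ : mono K β ∈ I ^ L) :
    L * ∏ i, d i ≤ ∑ i, β i * ∏ k ∈ Finset.univ.erase i, d k := by
  by_contra hcon
  push_neg at hcon
  set D := ∏ i, d i with hD
  set X := ∑ i, β i * ∏ k ∈ Finset.univ.erase i, d k with hX
  have hD1 : 1 ≤ D := Finset.prod_pos (fun i _ => hd i)
  set N := D + 1 with hN
  have hpow : mono K (N • β) ∈ I ^ (L * N) := by
    rw [← mono_pow, pow_mul]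
    exact Ideal.pow_mem_pow hβ N
  obtain ⟨γ, hγle, hγmin⟩ := exists_minGen_le hpow
  obtain ⟨e, hbox, hesum⟩ := hgood (L * N) (Nat.mul_pos hL (by omega)) γ hγmin
  -- termwise : e i * D ≤ N * (β i * e' i)
  have hterm : ∀ i : Fin n, e i * D ≤ N * (β i * ∏ k ∈ Finset.univ.erase i, d k) := by
    intro i
    have h1 : e i * d i ≤ γ i := (hbox i).1
    have h2 : γ i ≤ N * β i := by
      have := hγle i
      simpa using this
    calc e i * D = (e i * d i) * ∏ k ∈ Finset.univ.erase i, d k := by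
          rw [hD, ← Finset.mul_prod_erase Finset.univ d (Finset.mem_univ i)]; ring
      _ ≤ (N * β i) * ∏ k ∈ Finset.univ.erase i, d k :=
          Nat.mul_le_mul_right _ (le_trans h1 h2)
      _ = N * (β i * ∏ k ∈ Finset.univ.erase i, d k) := by ring
  have hmain : (L * N - 1) * D ≤ N * X := by
    calc (L * N - 1) * D = (∑ i, e i) * D := by rw [hesum]
      _ = ∑ i, e i * D := Finset.sum_mul _ _ _
      _ ≤ ∑ i, N * (β i * ∏ k ∈ Finset.univ.erase i, d k) :=
          Finset.sum_le_sum fun i _ => hterm i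
      _ = N * X := (Finset.mul_sum _ _ _).symm
  have hupper : N * X + N ≤ N * (L * D) := by
    have hXlt : X + 1 ≤ L * D := hcon
    calc N * X + N = N * (X + 1) := by ring
      _ ≤ N * (L * D) := Nat.mul_le_mul_left _ hXlt
  set P := N * (L * D) with hP
  have hP2 : (L * N - 1) * D = P - D := by
    rw [Nat.sub_mul, one_mul, hP]; ring_nf
  have hPN : N ≤ P := by
    calc N = N * 1 := by ring
      _ ≤ N * (L * D) := Nat.mul_le_mul_left _ (by nlinarith)
  rw [hP2] at hmain
  set Q := N * X with hQ
  omega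

end Star
section Key
variable {K : Type*} [Field K] {n : ℕ} {I : Ideal (MvPolynomial (Fin n) K)} {d : Fin n → ℕ}

/-- `μ^c μ_j` is a minimal generator of `I^{∑c + 1}` lying in box `c`. -/
lemma corner_minGen (hI : MPrimaryWithCorners I d) (hgood : IsGood I d)
    (c : Fin n → ℕ) (j : Fin n) :
    IsMinGen (I ^ (∑ i, c i + 1)) ((fun i => c i * d i) + Pi.single j (d j)) ∧
      InBox d c ((fun i => c i * d i) + Pi.single j (d j)) := by
  have hd : ∀ i, 0 < d i := hI.2.2.1
  set p : Fin n → ℕ := (fun i => c i * d i) + Pi.single j (d j) with hp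
  set D := ∏ i, d i with hD
  have hDi : ∀ i : Fin n, d i * ∏ k ∈ Finset.univ.erase i, d k = D :=
    fun i => Finset.mul_prod_erase Finset.univ d (Finset.mem_univ i)
  have hsump : ∑ i, p i * ∏ k ∈ Finset.univ.erase i, d k = (∑ i, c i + 1) * D := by
    have : ∀ i : Fin n, p i * ∏ k ∈ Finset.univ.erase i, d k =
        c i * D + (Pi.single j (d j) : Fin n → ℕ) i * ∏ k ∈ Finset.univ.erase i, d k := by
      intro i
      rw [hp]
      simp only [Pi.add_apply]
      rw [add_mul, mul_assoc, hDi i]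
    rw [Finset.sum_congr rfl (fun i _ => this i), Finset.sum_add_distrib,
      ← Finset.sum_mul]
    have h2 : ∑ i, (Pi.single j (d j) : Fin n → ℕ) i * ∏ k ∈ Finset.univ.erase i, d k = D := by
      rw [Finset.sum_eq_single j]
      · rw [Pi.single_eq_same, hDi j]
      · intro i _ hij
        rw [Pi.single_eq_of_ne hij, zero_mul]
      · intro h; exact absurd (Finset.mem_univ j) h
    rw [h2, add_mul, one_mul]
  constructor
  · constructor
    · have := mono_cd_single_mem (K := K) hI c j
      exact this
    · intro β hβ hle
      have hstar := star hgood hd (L := ∑ i, c i + 1) (by omega) hβ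
      have hup : ∑ i, β i * ∏ k ∈ Finset.univ.erase i, d k ≤
          ∑ i, p i * ∏ k ∈ Finset.univ.erase i, d k :=
        Finset.sum_le_sum fun i _ => Nat.mul_le_mul_right _ (hle i)
      rw [hsump] at hup
      rw [← hD] at hstar
      have heq : ∑ i, β i * ∏ k ∈ Finset.univ.erase i, d k =
          ∑ i, p i * ∏ k ∈ Finset.univ.erase i, d k := by
        rw [hsump]; omega
      have hterm := (Finset.sum_eq_sum_iff_of_le
        (fun i _ => Nat.mul_le_mul_right _ (hle i))).mp heq
      funext i
      have h := hterm i (Finset.mem_univ i)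
      have hpos : 0 < ∏ k ∈ Finset.univ.erase i, d k :=
        Finset.prod_pos fun k _ => hd k
      exact Nat.eq_of_mul_eq_mul_right hpos h
  · intro i
    by_cases h : i = j
    · subst h
      rw [hp]
      simp only [Pi.add_apply, Pi.single_eq_same]
      constructor
      · omega
      · rw [add_mul, one_mul]
    · rw [hp]
      simp only [Pi.add_apply, Pi.single_eq_of_ne h]
      constructor
      · omega
      · have := Nat.le_of_lt (hd i)
        rw [add_mul, one_mul]; omega

/-- between two comparable vectors there is one of any intermediate coordinate sum -/
lemma exists_mid (a m : Fin n → ℕ) (hle : ∀ i, a i ≤ m i) (s : ℕ)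
    (h1 : ∑ i, a i ≤ s) (h2 : s ≤ ∑ i, m i) :
    ∃ c : Fin n → ℕ, (∀ i, a i ≤ c i) ∧ (∀ i, c i ≤ m i) ∧ ∑ i, c i = s := by
  induction s, h1 using Nat.le_induction with
  | base => exact ⟨a, fun i => le_rfl, hle, rfl⟩
  | succ s hs IH =>
    obtain ⟨c, hac, hcm, hcs⟩ := IH (by omega)
    have : ∑ i, c i < ∑ i, m i := by omega
    obtain ⟨j, _, hj⟩ := Finset.exists_lt_of_sum_lt this
    refine ⟨c + Pi.single j 1, ?_, ?_, ?_⟩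
    · intro i
      have := hac i
      simp only [Pi.add_apply]
      omega
    · intro i
      by_cases h : i = j
      · subst h; simp only [Pi.add_apply, Pi.single_eq_same]; omega
      · have := hcm i
        simp only [Pi.add_apply, Pi.single_eq_of_ne h]; omega
    · simp only [Pi.add_apply]
      rw [Finset.sum_add_distrib, hcs]
      have : ∑ i, Pi.single j 1 i = 1 := by
        rw [Finset.sum_eq_single j]
        · exact Pi.single_eq_same j 1
        · intro i _ hij; exact Pi.single_eq_of_ne hij 1
        · intro h; exact absurd (Finset.mem_univ j) h
      omega

/-- KEY lemma -/
lemma key (hI : MPrimaryWithCorners I d) (hgood : IsGood I d)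
    (a : Fin n → ℕ) (L : ℕ) (hL : ∑ i, a i < L) {δ : Fin n → ℕ}
    (hδd : ∀ i, a i * d i ≤ δ i) (hδ : mono K δ ∈ I ^ L) :
    ∃ c α : Fin n → ℕ, (∀ i, a i ≤ c i) ∧ ∑ i, c i = L - 1 ∧
      IsMinGen (I ^ L) α ∧ InBox d c α ∧ ∀ i, α i ≤ δ i := by
  obtain ⟨α₀, hα₀le, hα₀min⟩ := exists_minGen_le hδ
  obtain ⟨b, hbbox, hbsum⟩ := hgood L (by omega) α₀ hα₀min
  set m : Fin n → ℕ := fun i => max (a i) (b i) with hm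
  have hmd : ∀ i, m i * d i ≤ δ i := by
    intro i
    have h1 := (hbbox i).1
    have h2 := hα₀le i
    have h3 := hδd i
    have hmax : m i = max (a i) (b i) := rfl
    rcases Nat.le_total (a i) (b i) with h | h
    · have he : m i * d i = b i * d i := by rw [hmax, Nat.max_eq_right h]
      omega
    · have he : m i * d i = a i * d i := by rw [hmax, Nat.max_eq_left h]
      omega
  have hbm : ∑ i, b i ≤ ∑ i, m i := Finset.sum_le_sum fun i _ => le_max_right _ _
  obtain ⟨c, hac, hcm, hcs⟩ := exists_mid a m (fun i => le_max_left _ _) (L - 1)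
    (by omega) (by omega)
  by_cases hcase : ∑ i, m i = L - 1
  · -- then b = m ≥ a : use α₀ with box b
    have hbeq : ∀ i, b i = m i := by
      have := (Finset.sum_eq_sum_iff_of_le
        (fun i (_ : i ∈ Finset.univ) => le_max_right (a i) (b i))).mp
        (by rw [hbsum, hcase])
      intro i; exact (this i (Finset.mem_univ i)).symm ▸ rfl
    refine ⟨b, α₀, fun i => ?_, hbsum, hα₀min, hbbox, hα₀le⟩
    rw [hbeq i]; exact le_max_left _ _
  · have hlt : ∑ i, c i < ∑ i, m i := by omega
    obtain ⟨j, _, hj⟩ := Finset.exists_lt_of_sum_lt hlt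
    obtain ⟨hmin, hbox⟩ := corner_minGen (K := K) hI hgood c j
    have hLc : ∑ i, c i + 1 = L := by omega
    rw [hLc] at hmin
    refine ⟨c, _, hac, hcs, hmin, hbox, ?_⟩
    intro i
    by_cases h : i = j
    · subst h
      simp only [Pi.add_apply, Pi.single_eq_same]
      have hA : (c i + 1) * d i ≤ m i * d i := Nat.mul_le_mul_right _ (by omega)
      have hB := hmd i
      have hC : (c i + 1) * d i = c i * d i + d i := by ring
      omega
    · simp only [Pi.add_apply, Pi.single_eq_of_ne h]
      exact le_trans (Nat.mul_le_mul_right _ (hcm i)) (hmd i)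

end Key
section Final
variable {K : Type*} [Field K] {n : ℕ}

lemma support_mono_mul (w : Fin n → ℕ) (p : MvPolynomial (Fin n) K) :
    (mono K w * p).support =
      p.support.map (addLeftEmbedding (Finsupp.equivFunOnFinite.symm w)) := by
  have h : mono K w = AddMonoidAlgebra.single (Finsupp.equivFunOnFinite.symm w) (1 : K) := by
    rw [mono, ← MvPolynomial.single_eq_monomial]
  rw [h]
  exact AddMonoidAlgebra.support_coeff_single_mul p 1 (fun y => by simp) _

theorem colon_power_eq_sum' {K : Type*} [Field K] {n : ℕ}
    (I : Ideal (MvPolynomial (Fin n) K)) (d : Fin n → ℕ)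
    (hI : MPrimaryWithCorners I d) (hgood : IsGood I d)
    (a : Fin n → ℕ) (t : ℕ) (ht : 1 ≤ t) :
    (I ^ (∑ i, a i + t)).colon (Ideal.span {mono K (fun i => a i * d i)}) =
      ⨆ tv : {v : Fin n → ℕ // ∑ i, v i = t - 1},
        Ideal.span {mono K (fun i => tv.1 i * d i)} * boxIdeal I d (tv.1 + a) := by
  classical
  obtain ⟨A, hA⟩ := hI.1
  set L := ∑ i, a i + t with hLdef
  obtain ⟨B, hB⟩ := exists_pow_span hA L
  set ad : Fin n → ℕ := fun i => a i * d i with had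
  set UL : Set (Fin n → ℕ) := {γ | mono K (γ + ad) ∈ I ^ L} with hUL
  -- LHS is the monomial ideal on UL
  have hLHS : (I ^ L).colon (Ideal.span {mono K ad}) = Ideal.span (mono K '' UL) := by
    apply le_antisymm
    · intro p hp
      have hmul : p * mono K ad ∈ I ^ L := Ideal.mem_colon_span_singleton.mp hp
      rw [hB, mem_span_mono] at hmul
      rw [mem_span_mono]
      intro v hv
      refine ⟨(v : Fin n → ℕ), ?_, fun i => le_rfl⟩
      have hv' : Finsupp.equivFunOnFinite.symm ad + v ∈ (p * mono K ad).support := by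
        rw [mul_comm, support_mono_mul]
        exact Finset.mem_map.mpr ⟨v, hv, rfl⟩
      obtain ⟨u, huB, hule⟩ := hmul _ hv'
      have humem : mono K u ∈ I ^ L := by
        rw [hB]; exact Ideal.subset_span ⟨u, huB, rfl⟩
      refine Set.mem_setOf_eq ▸ mono_mem_of_le humem ?_
      intro i
      have h1 := hule i
      simp only [Finsupp.add_apply, Finsupp.coe_equivFunOnFinite_symm] at h1
      simp only [Pi.add_apply]
      omega
    · rw [Ideal.span_le]
      rintro x ⟨γ, hγ, rfl⟩
      rw [SetLike.mem_coe, Ideal.mem_colon_span_singleton, mono_mul]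
      exact hγ
  -- RHS summands are monomial ideals
  set W : {v : Fin n → ℕ // ∑ i, v i = t - 1} → Set (Fin n → ℕ) := fun tv =>
    (fun α => (fun i => tv.1 i * d i) + (α - fun i => (tv.1 + a) i * d i)) ''
      {α | InBox d (tv.1 + a) α ∧ IsMinGen (I ^ (∑ i, (tv.1 + a) i + 1)) α} with hW
  have hsummand : ∀ tv : {v : Fin n → ℕ // ∑ i, v i = t - 1},
      Ideal.span {mono K (fun i => tv.1 i * d i)} * boxIdeal I d (tv.1 + a) =
        Ideal.span (mono K '' W tv) := by
    intro tv
    rw [boxIdeal, hW]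
    rw [show (fun α : Fin n → ℕ => mono K (α - fun i => (tv.1 + a) i * d i)) ''
        {α | InBox d (tv.1 + a) α ∧ IsMinGen (I ^ (∑ i, (tv.1 + a) i + 1)) α} =
        mono K '' ((fun α : Fin n → ℕ => α - fun i => (tv.1 + a) i * d i) ''
          {α | InBox d (tv.1 + a) α ∧ IsMinGen (I ^ (∑ i, (tv.1 + a) i + 1)) α}) from
      (Set.image_image _ _ _).symm]
    rw [show ({mono K (fun i => tv.1 i * d i)} : Set (MvPolynomial (Fin n) K)) =
        mono K '' {fun i => tv.1 i * d i} from (Set.image_singleton).symm]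
    rw [span_mono_mul_span_mono, Set.image2_singleton_left]
    simp only [Set.image_image]
  -- assemble
  rw [hLHS]
  have hrhs : ⨆ tv : {v : Fin n → ℕ // ∑ i, v i = t - 1},
      Ideal.span {mono K (fun i => tv.1 i * d i)} * boxIdeal I d (tv.1 + a) =
        Ideal.span (mono K '' ⋃ tv, W tv) := by
    rw [Set.image_iUnion, Ideal.span_iUnion]
    exact iSup_congr hsummand
  rw [hrhs]
  -- final combinatorial equivalence
  apply le_antisymm
  · rw [Ideal.span_le]
    rintro x ⟨γ, hγ, rfl⟩
    rw [SetLike.mem_coe, mono_mem_span]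
    rw [hUL, Set.mem_setOf_eq] at hγ
    have hδd : ∀ i, a i * d i ≤ (γ + ad) i := by
      intro i; simp only [Pi.add_apply, had]; omega
    obtain ⟨c, α, hac, hcs, hmin, hbox, hαle⟩ :=
      key hI hgood a L (by omega) hδd hγ
    set tv : Fin n → ℕ := fun i => c i - a i with htvdef
    have htva : tv + a = c := by
      funext i; simp only [Pi.add_apply, htvdef]
      have := hac i; omega
    have htv : ∑ i, tv i = t - 1 := by
      have hsum : ∑ i, tv i + ∑ i, a i = ∑ i, c i := by
        rw [← Finset.sum_add_distrib]
        exact Finset.sum_congr rfl fun i _ => by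
          simp only [htvdef]; have := hac i; omega
      omega
    refine ⟨(fun i => tv i * d i) + (α - fun i => (tv + a) i * d i),
      Set.mem_iUnion.mpr ⟨⟨tv, htv⟩, ⟨α, ⟨?_, ?_⟩, rfl⟩⟩, ?_⟩
    · rw [htva]; exact hbox
    · rw [htva]
      have : ∑ i, c i + 1 = L := by omega
      rw [this]; exact hmin
    · intro i
      have h1 := (hbox i).1
      have h2 : α i ≤ γ i + a i * d i := by
        have := hαle i
        simpa [had] using this
      have h3 := hac i
      rw [htva]
      simp only [Pi.add_apply, Pi.sub_apply]
      have h4 : tv i * d i = c i * d i - a i * d i := by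
        rw [htvdef]; exact Nat.sub_mul _ _ _
      have h5 : a i * d i ≤ c i * d i := Nat.mul_le_mul_right _ h3
      omega
  · rw [Ideal.span_le]
    rintro x ⟨w, hw, rfl⟩
    rw [SetLike.mem_coe]
    apply Ideal.subset_span
    refine ⟨w, ?_, rfl⟩
    obtain ⟨tv, hwtv⟩ := Set.mem_iUnion.mp hw
    obtain ⟨α, ⟨hbox, hmin⟩, rfl⟩ := hwtv
    rw [hUL, Set.mem_setOf_eq]
    have heq : ((fun i => tv.1 i * d i) + (α - fun i => (tv.1 + a) i * d i)) + ad = α := by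
      funext i
      have h1 := (hbox i).1
      simp only [Pi.add_apply, Pi.sub_apply, had]
      have h2 : (tv.1 i + a i) * d i = tv.1 i * d i + a i * d i := Nat.add_mul _ _ _
      simp only [Pi.add_apply] at h1
      omega
    rw [heq]
    have hsum : ∑ i, (tv.1 + a) i + 1 = L := by
      have : ∑ i, (tv.1 + a) i = ∑ i, tv.1 i + ∑ i, a i := by
        simp only [Pi.add_apply]; exact Finset.sum_add_distrib
      have h2 := tv.2
      omega
    rw [← hsum]
    exact hmin.1

end Final
/-- Lemma 10.8: for a good ideal `I`, nonnegative integers `a_1,…,a_n` with sum `a`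
and `t ≥ 1`,
`I^{a+t} : ⟨μ_1^{a_1}⋯μ_n^{a_n}⟩ = Σ_{t_1+⋯+t_n = t-1} μ_1^{t_1}⋯μ_n^{t_n} · I_{t_1+a_1,…,t_n+a_n}`. -/
theorem colon_power_eq_sum {K : Type*} [Field K] {n : ℕ}
    (I : Ideal (MvPolynomial (Fin n) K)) (d : Fin n → ℕ)
    (hI : MPrimaryWithCorners I d) (hgood : IsGood I d)
    (a : Fin n → ℕ) (t : ℕ) (ht : 1 ≤ t) :
    (I ^ (∑ i, a i + t)).colon (Ideal.span {mono K (fun i => a i * d i)}) =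
      ⨆ tv : {v : Fin n → ℕ // ∑ i, v i = t - 1},
        Ideal.span {mono K (fun i => tv.1 i * d i)} * boxIdeal I d (tv.1 + a) := by
  exact colon_power_eq_sum' I d hI hgood a t ht
end GasanovaRR
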